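/- Let A be a finite idempotent algebra, α a congruence of A, and k ≥ 2. If the quotient algebra A/α has a k-ary cyclic term operation and every α-block (as a subalgebra of A) has a k-ary cyclic term operation, then A has a k-ary cyclic term operation. -/

import Mathlib

structure Signature : Type 1 where
  symbols : Type
  arity : symbols → ℕ

structure UAlgebra (σ : Signature) : Type 1 where
  carrier : Type
  op : ∀ s : σ.symbols, (Fin (σ.arity s) → carrier) → carrier

inductive Term (σ : Signature) (n : ℕ) : Type
  | var : Fin n → Term σ n
  | app (s : σ.symbols) : (Fin (σ.arity s) → Term σ n) → Term σ n

def Term.eval {σ : Signature} (A : UAlgebra σ) {n : ℕ} :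
    Term σ n → (Fin n → A.carrier) → A.carrier
  | .var i, x => x i
  | .app s ts, x => A.op s fun j => Term.eval A (ts j) x

/-- `B` is a subuniverse of the algebra `A`. -/
def Subuniverse {σ : Signature} (A : UAlgebra σ) (B : Set A.carrier) : Prop :=
  ∀ (s : σ.symbols) (a : Fin (σ.arity s) → A.carrier), (∀ i, a i ∈ B) → A.op s a ∈ B

/-- `B` absorbs `A` with respect to the term `t`. -/
def AbsorbsWith {σ : Signature} (A : UAlgebra σ) (B : Set A.carrier) {n : ℕ} (t : Term σ n) : Prop :=
  ∀ (k : Fin n) (a : Fin n → A.carrier), (∀ i, i ≠ k → a i ∈ B) → t.eval A a ∈ B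

/-- `C` absorbs the subalgebra with universe `B` (inside the ambient algebra `A`)
with respect to the term `t`. -/
def AbsorbsWithIn {σ : Signature} (A : UAlgebra σ) (B C : Set A.carrier) {n : ℕ}
    (t : Term σ n) : Prop :=
  ∀ (k : Fin n) (a : Fin n → A.carrier), (∀ i, a i ∈ B) → (∀ i, i ≠ k → a i ∈ C) →
    t.eval A a ∈ C

/-- `B` is an absorbing subalgebra (subuniverse) of `A`. -/
def Absorbing {σ : Signature} (A : UAlgebra σ) (B : Set A.carrier) : Prop :=
  Subuniverse A B ∧ ∃ (n : ℕ) (t : Term σ n), AbsorbsWith A B t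

/-- `B` is a proper absorbing subalgebra of `A`: `∅ ≠ B ≠ A`. -/
def ProperAbsorbing {σ : Signature} (A : UAlgebra σ) (B : Set A.carrier) : Prop :=
  Absorbing A B ∧ B.Nonempty ∧ B ≠ Set.univ

/-- `C` is a minimal absorbing subalgebra of `A`. -/
def MinAbsorbing {σ : Signature} (A : UAlgebra σ) (C : Set A.carrier) : Prop :=
  Absorbing A C ∧ C.Nonempty ∧ ∀ C' ⊆ C, Absorbing A C' → C'.Nonempty → C' = C

/-- All (basic, equivalently term) operations of `A` are idempotent. -/
def Idempotent {σ : Signature} (A : UAlgebra σ) : Prop :=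
  ∀ (s : σ.symbols) (a : A.carrier), A.op s (fun _ => a) = a

/-- `t` is a Taylor term of the algebra `A`. -/
def IsTaylorTerm {σ : Signature} (A : UAlgebra σ) {k : ℕ} (t : Term σ k) : Prop :=
  (∀ a : A.carrier, t.eval A (fun _ => a) = a) ∧
  ∀ j : Fin k, ∃ u v : Fin k → Fin 2, u j = 0 ∧ v j = 1 ∧
    ∀ x : Fin 2 → A.carrier, t.eval A (fun i => x (u i)) = t.eval A (fun i => x (v i))

/-- The product of two algebras of the same signature. -/
def UAlgebra.prod {σ : Signature} (A B : UAlgebra σ) : UAlgebra σ where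
  carrier := A.carrier × B.carrier
  op s x := (A.op s fun i => (x i).1, B.op s fun i => (x i).2)

/-- The `k`-th power of an algebra. -/
def UAlgebra.pow {σ : Signature} (A : UAlgebra σ) (k : ℕ) : UAlgebra σ where
  carrier := Fin k → A.carrier
  op s x := fun j => A.op s fun i => x i j

/-- `R ⊆ A × B` is subdirect: both projections are onto. -/
def Subdirect2 {α β : Type} (R : Set (α × β)) : Prop :=
  (∀ a, ∃ b, (a, b) ∈ R) ∧ ∀ b, ∃ a, (a, b) ∈ R

/-- `a` and `a'` are linked in `R` (connected in the bipartite graph of `R`). -/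
def LinkedPair {α β : Type} (R : Set (α × β)) (a a' : α) : Prop :=
  Relation.ReflTransGen (fun x y => ∃ b, (x, b) ∈ R ∧ (y, b) ∈ R) a a'

/-- `R` is linked: any two elements of the projection of `R` to the first
coordinate are `R`-linked. -/
def IsLinked {α β : Type} (R : Set (α × β)) : Prop :=
  ∀ a a', (∃ b, (a, b) ∈ R) → (∃ b, (a', b) ∈ R) → LinkedPair R a a'

/-- Cyclic shift of a `k`-tuple. -/
def cycShift {α : Type} {k : ℕ} (x : Fin k → α) : Fin k → α := fun i =>
  x ⟨(i.val + 1) % k, Nat.mod_lt _ (Nat.lt_of_le_of_lt (Nat.zero_le _) i.isLt)⟩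

/-- `t` is a cyclic term of `A`: idempotent and invariant under cyclic shift. -/
def IsCyclicTerm {σ : Signature} (A : UAlgebra σ) {k : ℕ} (t : Term σ k) : Prop :=
  (∀ a : A.carrier, t.eval A (fun _ => a) = a) ∧
  ∀ x : Fin k → A.carrier, t.eval A x = t.eval A (cycShift x)

/-- A congruence of `A`: an equivalence relation which is a subuniverse of `A²`. -/
def IsCongruence {σ : Signature} (A : UAlgebra σ) (θ : Set (A.carrier × A.carrier)) : Prop :=
  Equivalence (fun a b => (a, b) ∈ θ) ∧ Subuniverse (A.prod A) θ


/-! ### Auxiliary machinery for lifting cyclic terms -/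

namespace CyclicLift

variable {σ : Signature}

/-- Rename the variables of a term. -/
def rename {n m : ℕ} (f : Fin n → Fin m) : Term σ n → Term σ m
  | .var i => .var (f i)
  | .app s ts => .app s (fun j => rename f (ts j))

/-- Substitute terms for the variables of a term. -/
def subst {n m : ℕ} : Term σ n → (Fin n → Term σ m) → Term σ m
  | .var i, g => g i
  | .app s ts, g => .app s (fun j => subst (ts j) g)

lemma eval_rename (A : UAlgebra σ) {n m : ℕ} (f : Fin n → Fin m) (t : Term σ n)
    (x : Fin m → A.carrier) : (rename f t).eval A x = t.eval A (fun i => x (f i)) := by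
  induction t with
  | var i => rfl
  | app s ts ih =>
    show A.op s _ = A.op s _
    exact congrArg _ (funext fun j => ih j)

lemma eval_subst (A : UAlgebra σ) {n m : ℕ} (t : Term σ n) (g : Fin n → Term σ m)
    (x : Fin m → A.carrier) : (subst t g).eval A x = t.eval A (fun i => (g i).eval A x) := by
  induction t with
  | var i => rfl
  | app s ts ih =>
    show A.op s _ = A.op s _
    exact congrArg _ (funext fun j => ih j)

/-- Rotation of indices by `m` (mod `k`). -/
def shAdd {k : ℕ} (m : ℕ) (j : Fin k) : Fin k :=
  ⟨(j.val + m) % k, Nat.mod_lt _ (Nat.lt_of_le_of_lt (Nat.zero_le _) j.isLt)⟩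

lemma shAdd_zero {k : ℕ} (j : Fin k) : shAdd 0 j = j := by
  apply Fin.ext
  simp [shAdd, Nat.mod_eq_of_lt j.isLt]

lemma shAdd_shAdd {k : ℕ} (m r : ℕ) (j : Fin k) :
    shAdd m (shAdd r j) = shAdd (r + m) j := by
  apply Fin.ext
  show ((j.val + r) % k + m) % k = (j.val + (r + m)) % k
  rw [Nat.mod_add_mod, Nat.add_assoc]

lemma shAdd_mod {k : ℕ} (m : ℕ) (j : Fin k) : shAdd (m % k) j = shAdd m j := by
  apply Fin.ext
  show (j.val + m % k) % k = (j.val + m) % k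
  rw [Nat.add_mod_mod]

/-- One composition step: `step s u (x) = s(u(x), u(σx), …, u(σ^{k-1}x))`. -/
def step {k : ℕ} (s u : Term σ k) : Term σ k :=
  subst s (fun i => rename (shAdd i.val) u)

lemma eval_step (A : UAlgebra σ) {k : ℕ} (s u : Term σ k) (x : Fin k → A.carrier) :
    (step s u).eval A x = s.eval A (fun i => u.eval A (fun j => x (shAdd i.val j))) := by
  simp only [step, eval_subst, eval_rename]

/-- Fold the step construction over a list of block representatives. -/
def buildChain {k : ℕ} {β : Type} (f : β → Term σ k) : List β → Term σ k → Term σ k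
  | [], u => u
  | a :: L, u => buildChain f L (step (f a) u)

/-- In an idempotent algebra every term operation is idempotent. -/
lemma term_idem {A : UAlgebra σ} (hI : Idempotent A) {n : ℕ} (t : Term σ n) (a : A.carrier) :
    t.eval A (fun _ => a) = a := by
  induction t with
  | var i => rfl
  | app s ts ih =>
    show A.op s (fun j => (ts j).eval A (fun _ => a)) = a
    rw [show (fun j => (ts j).eval A (fun _ => a)) = (fun _ => a) from funext fun j => ih j]
    exact hI s a

/-- Congruence blocks are closed under term operations. -/
lemma term_block {A : UAlgebra σ} (hI : Idempotent A) {θ : Set (A.carrier × A.carrier)}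
    (hθ : IsCongruence A θ) {n : ℕ} (t : Term σ n) (x : Fin n → A.carrier) (a : A.carrier)
    (hx : ∀ i, (x i, a) ∈ θ) : (t.eval A x, a) ∈ θ := by
  induction t with
  | var i => exact hx i
  | app s ts ih =>
    have h := hθ.2 s (fun i => ((ts i).eval A x, a)) (fun i => ih i)
    have h2 : (A.prod A).op s (fun i => ((ts i).eval A x, a))
        = (A.op s (fun i => (ts i).eval A x), A.op s (fun _ => a)) := rfl
    rw [h2, hI s a] at h
    exact h

/-- A term cyclic on a block is invariant under all rotations of block tuples. -/
lemma block_cyc_iter {A : UAlgebra σ} {θ : Set (A.carrier × A.carrier)} {k : ℕ}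
    (tba : Term σ k) (a : A.carrier)
    (hc : ∀ x : Fin k → A.carrier, (∀ i, (x i, a) ∈ θ) → tba.eval A x = tba.eval A (cycShift x))
    (m : ℕ) (w : Fin k → A.carrier) (hw : ∀ i, (w i, a) ∈ θ) :
    tba.eval A (fun j => w (shAdd m j)) = tba.eval A w := by
  induction m with
  | zero => simp only [shAdd_zero]
  | succ m ih =>
    have h1 : (fun j => w (shAdd (m + 1) j)) = cycShift (fun j => w (shAdd m j)) := by
      funext j
      show w (shAdd (m + 1) j) = w (shAdd m (shAdd 1 j))
      rw [shAdd_shAdd, Nat.add_comm 1 m]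
    rw [h1, ← hc (fun j => w (shAdd m j)) (fun j => hw _), ih]

end CyclicLift

open CyclicLift in
/-- If `A` is a finite idempotent algebra, `α` a congruence of
`A` and `k ≥ 2`, and both the quotient `A/α` and every `α`-block have `k`-ary
cyclic term operations, then `A` has a `k`-ary cyclic term operation. (A cyclic
term of the quotient is expressed by a term of `A` which is cyclic and idempotent
modulo `α`; a cyclic term of the block of `a` is a term of `A` which is cyclic on
tuples from that block.) -/
theorem cyclic_term_lift {σ : Signature} (A : UAlgebra σ) [Fintype A.carrier]
    (hI : Idempotent A)
    (θ : Set (A.carrier × A.carrier)) (hθ : IsCongruence A θ)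
    (k : ℕ) (hk : 2 ≤ k)
    (hquot : ∃ t : Term σ k,
      (∀ a : A.carrier, (t.eval A (fun _ => a), a) ∈ θ) ∧
      ∀ x : Fin k → A.carrier, (t.eval A x, t.eval A (cycShift x)) ∈ θ)
    (hblock : ∀ a : A.carrier, ∃ t : Term σ k,
      ∀ x : Fin k → A.carrier, (∀ i, (x i, a) ∈ θ) → t.eval A x = t.eval A (cycShift x)) :
    ∃ t : Term σ k, IsCyclicTerm A t := by
  classical
  obtain ⟨t0, -, ht0⟩ := hquot
  choose tb htb using hblock
  -- rotating a tuple by 1 is `cycShift`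
  have hrot1 : ∀ x : Fin k → A.carrier, cycShift x = fun j => x (shAdd 1 j) := fun x => rfl
  -- composition of rotations, applied under `eval`
  have eval_step_rot : ∀ (s u : Term σ k) (x : Fin k → A.carrier) (m : ℕ),
      (step s u).eval A (fun j => x (shAdd m j)) =
        s.eval A (fun i => u.eval A (fun j => x (shAdd (i.val + m) j))) := by
    intro s u x m
    rw [eval_step]
    congr 1
    funext i
    congr 1
    funext j
    exact congrArg x (shAdd_shAdd m i.val j)
  -- all rotated values of `t0` are θ-related to the unrotated value
  have hInv0 : ∀ (x : Fin k → A.carrier) (m : ℕ),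
      (t0.eval A (fun j => x (shAdd m j)), t0.eval A x) ∈ θ := by
    intro x m
    refine hθ.1.symm ?_
    induction m with
    | zero =>
      have h0 : (fun j => x (shAdd 0 j)) = x := funext fun j => congrArg x (shAdd_zero j)
      rw [h0]; exact hθ.1.refl _
    | succ m ih =>
      refine hθ.1.trans ih ?_
      have h1 : (fun j => x (shAdd (m + 1) j)) = cycShift (fun j => x (shAdd m j)) := by
        funext j
        show x (shAdd (m + 1) j) = x (shAdd m (shAdd 1 j))
        rw [shAdd_shAdd, Nat.add_comm 1 m]
      rw [h1]
      exact ht0 _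
  -- `step` preserves the invariant
  have hstep_inv : ∀ (s u : Term σ k),
      (∀ x m, (u.eval A (fun j => x (shAdd m j)), t0.eval A x) ∈ θ) →
      ∀ x m, ((step s u).eval A (fun j => x (shAdd m j)), t0.eval A x) ∈ θ := by
    intro s u hu x m
    rw [eval_step_rot]
    exact term_block hI hθ s _ _ (fun i => hu x (i.val + m))
  -- `step` preserves the "already constant on the block of a" property
  have hstep_done : ∀ (s u : Term σ k) (a : A.carrier),
      (∀ x, (t0.eval A x, a) ∈ θ → ∀ m, u.eval A (fun j => x (shAdd m j)) = u.eval A x) →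
      ∀ x, (t0.eval A x, a) ∈ θ → ∀ m,
        (step s u).eval A (fun j => x (shAdd m j)) = (step s u).eval A x := by
    intro s u a hu x hx m
    rw [eval_step_rot, eval_step]
    have e1 : (fun i : Fin k => u.eval A (fun j => x (shAdd (i.val + m) j)))
        = fun _ => u.eval A x := funext fun i => hu x hx (i.val + m)
    have e2 : (fun i : Fin k => u.eval A (fun j => x (shAdd i.val j)))
        = fun _ => u.eval A x := funext fun i => hu x hx i.val
    rw [e1, e2]
  -- applying the block term of `a` makes the tuple constant on the block of `a`
  have hstep_new : ∀ (a : A.carrier) (u : Term σ k),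
      (∀ x m, (u.eval A (fun j => x (shAdd m j)), t0.eval A x) ∈ θ) →
      ∀ x, (t0.eval A x, a) ∈ θ → ∀ m,
        (step (tb a) u).eval A (fun j => x (shAdd m j)) = (step (tb a) u).eval A x := by
    intro a u hu x hx m
    rw [eval_step_rot, eval_step]
    have hw : ∀ i : Fin k, ((fun i : Fin k => u.eval A (fun j => x (shAdd i.val j))) i, a) ∈ θ :=
      fun i => hθ.1.trans (hu x i.val) hx
    have h1 : (fun i : Fin k => u.eval A (fun j => x (shAdd (i.val + m) j)))
        = fun i => (fun i' : Fin k => u.eval A (fun j => x (shAdd i'.val j))) (shAdd m i) := by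
      funext i
      show u.eval A (fun j => x (shAdd (i.val + m) j))
          = u.eval A (fun j => x (shAdd ((shAdd m i).val) j))
      congr 1
      funext j
      exact (congrArg x (shAdd_mod (i.val + m) j)).symm
    rw [h1]
    exact block_cyc_iter (tb a) a (htb a) m _ hw
  -- folding over a list of representatives
  have hchain : ∀ (L : List A.carrier) (u : Term σ k),
      (∀ x m, (u.eval A (fun j => x (shAdd m j)), t0.eval A x) ∈ θ) →
      (∀ a, (∀ x, (t0.eval A x, a) ∈ θ → ∀ m,
            u.eval A (fun j => x (shAdd m j)) = u.eval A x) →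
         ∀ x, (t0.eval A x, a) ∈ θ → ∀ m,
           (buildChain tb L u).eval A (fun j => x (shAdd m j)) = (buildChain tb L u).eval A x) ∧
      (∀ a ∈ L, ∀ x, (t0.eval A x, a) ∈ θ → ∀ m,
        (buildChain tb L u).eval A (fun j => x (shAdd m j)) = (buildChain tb L u).eval A x) := by
    intro L
    induction L with
    | nil =>
      intro u hu
      exact ⟨fun a h => h, fun a ha => absurd ha List.not_mem_nil⟩
    | cons a L ih =>
      intro u hu
      obtain ⟨p1, p3⟩ := ih (step (tb a) u) (hstep_inv (tb a) u hu)
      refine ⟨fun b hb => p1 b (hstep_done (tb a) u b hb), ?_⟩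
      intro b hb
      rcases List.mem_cons.mp hb with rfl | hb
      · exact p1 b (hstep_new b u hu)
      · exact p3 b hb
  obtain ⟨-, hdone⟩ := hchain (Finset.univ : Finset A.carrier).toList t0 hInv0
  refine ⟨buildChain tb (Finset.univ : Finset A.carrier).toList t0,
    fun a => term_idem hI _ a, fun x => ?_⟩
  have hd := hdone (t0.eval A x) (Finset.mem_toList.mpr (Finset.mem_univ _)) x (hθ.1.refl _) 1
  rw [hrot1 x]
  exact hd.symm
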